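/- Let H be a hypothesis class, P_{S_1},…,P_{S_n} source probability distributions over X×Y with marginals D_{S_1},…,D_{S_n}, and P_T a target distribution over X×Y with marginal D_T. For every probability distribution ρ over H and every weight distribution v = (v_1,…,v_n) over the source domains: R_{P_T}(G_ρ) ≤ Σ_{j=1}^n v_j·R_{P_{S_j}}(G_ρ) + (1/2)·dis_ρ(D_S^v,D_T) + λ_ρ^v, where λ_ρ^v = | e_{P_T}(G_ρ,G_ρ) − Σ_j v_j·e_{P_{S_j}}(G_ρ,G_ρ) |. -/

import Mathlib

open MeasureTheory
open scoped ENNReal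

noncomputable section

variable {H X : Type*} [MeasurableSpace H] [MeasurableSpace X]

/-- Disagreement indicator `1[h(x) ≠ h'(x)]` for a pair of classifiers. -/
def dAgree (f : H → X → Bool) (hh : H × H) (x : X) : ℝ :=
  if f hh.1 x = f hh.2 x then 0 else 1

/-- Expected disagreement `R_D(Gρ,Gρ) = E_{(h,h')∼ρ×ρ} E_{x∼D} 1[h(x)≠h'(x)]`. -/
def expDis (f : H → X → Bool) (ρ : Measure H) (D : Measure X) : ℝ :=
  ∫ hh : H × H, ∫ x, dAgree f hh x ∂D ∂(ρ.prod ρ)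

/-- Empirical disagreement `(1/m) Σ_i E_{(h,h')∼ρ×ρ} 1[h(x_i)≠h'(x_i)]`. -/
def empDis (f : H → X → Bool) (ρ : Measure H) {m : ℕ} (s : Fin m → X) : ℝ :=
  (1 / (m : ℝ)) * ∑ i, ∫ hh : H × H, dAgree f hh (s i) ∂(ρ.prod ρ)

/-- Kullback-Leibler divergence `KL(ρ‖π) = E_{h∼ρ} ln (dρ/dπ (h))`. -/
def KLd (ρ π : Measure H) : ℝ := ∫ h, Real.log ((ρ.rnDeriv π h).toReal) ∂ρ

/-- Error indicator `1[h(x) ≠ y]` on a labeled example. -/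
def errInd (f : H → X → Bool) (h : H) (z : X × Bool) : ℝ :=
  if f h z.1 = z.2 then 0 else 1

/-- Gibbs risk `R_P(Gρ) = E_{h∼ρ} E_{(x,y)∼P} 1[h(x)≠y]`. -/
def gibbsRisk (f : H → X → Bool) (ρ : Measure H) (P : Measure (X × Bool)) : ℝ :=
  ∫ h, ∫ z, errInd f h z ∂P ∂ρ

/-- Expected joint error `e_P(Gρ,Gρ) = E_{(h,h')∼ρ×ρ} E_{(x,y)∼P} 1[h(x)≠y]·1[h'(x)≠y]`. -/
def jointErr (f : H → X → Bool) (ρ : Measure H) (P : Measure (X × Bool)) : ℝ :=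
  ∫ hh : H × H, ∫ z, errInd f hh.1 z * errInd f hh.2 z ∂P ∂(ρ.prod ρ)

/-- Empirical Gibbs risk `(1/m) Σ_i E_{h∼ρ} 1[h(x_i)≠y_i]`. -/
def empGibbs (f : H → X → Bool) (ρ : Measure H) {m : ℕ} (s : Fin m → X × Bool) : ℝ :=
  (1 / (m : ℝ)) * ∑ i, ∫ h, errInd f h (s i) ∂ρ

/-! ### Auxiliary lemmas -/

lemma measurable_errInd (f : H → X → Bool) (hf : Measurable (Function.uncurry f)) :
    Measurable (fun p : H × (X × Bool) => errInd f p.1 p.2) := by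
  have h1 : Measurable (fun p : H × (X × Bool) => f p.1 p.2.1) :=
    hf.comp (measurable_fst.prodMk (measurable_fst.comp measurable_snd))
  have h2 : Measurable (fun p : H × (X × Bool) => p.2.2) :=
    measurable_snd.comp measurable_snd
  exact Measurable.ite (measurableSet_eq_fun h1 h2)
    measurable_const measurable_const

lemma measurable_dAgree (f : H → X → Bool) (hf : Measurable (Function.uncurry f)) :
    Measurable (fun p : (H × H) × X => dAgree f p.1 p.2) := by
  have h1 : Measurable (fun p : (H × H) × X => f p.1.1 p.2) :=
    hf.comp ((measurable_fst.comp measurable_fst).prodMk measurable_snd)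
  have h2 : Measurable (fun p : (H × H) × X => f p.1.2 p.2) :=
    hf.comp ((measurable_snd.comp measurable_fst).prodMk measurable_snd)
  exact Measurable.ite (measurableSet_eq_fun h1 h2)
    measurable_const measurable_const

lemma errInd_nonneg (f : H → X → Bool) (h : H) (z : X × Bool) : 0 ≤ errInd f h z := by
  unfold errInd; split <;> norm_num

lemma errInd_le_one (f : H → X → Bool) (h : H) (z : X × Bool) : errInd f h z ≤ 1 := by
  unfold errInd; split <;> norm_num

/-- Integrability of a bounded measurable function w.r.t. a finite measure. -/
lemma integrable_of_bounded {α : Type*} [MeasurableSpace α] {μ : Measure α}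
    [IsFiniteMeasure μ] {g : α → ℝ} (hg : Measurable g) (C : ℝ)
    (hb : ∀ a, |g a| ≤ C) : Integrable g μ :=
  (integrable_const C).mono' hg.aestronglyMeasurable (ae_of_all _ hb)

/-- The key pointwise identity on `Bool`-labeled examples. -/
lemma pointwise_identity (f : H → X → Bool) (hh : H × H) (z : X × Bool) :
    errInd f hh.1 z + errInd f hh.2 z
      = dAgree f hh z.1 + 2 * (errInd f hh.1 z * errInd f hh.2 z) := by
  unfold errInd dAgree
  rcases Bool.eq_false_or_eq_true (f hh.1 z.1) with h1 | h1 <;>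
  rcases Bool.eq_false_or_eq_true (f hh.2 z.1) with h2 | h2 <;>
  rcases Bool.eq_false_or_eq_true z.2 with h3 | h3 <;>
  simp [h1, h2, h3] <;> norm_num

/-- Decomposition: `R_P(Gρ) = (1/2) R_D(Gρ,Gρ) + e_P(Gρ,Gρ)`. -/
lemma gibbs_decomp (f : H → X → Bool) (hf : Measurable (Function.uncurry f))
    (ρ : Measure H) [IsProbabilityMeasure ρ]
    (P : Measure (X × Bool)) [IsProbabilityMeasure P] :
    gibbsRisk f ρ P = (1 / 2) * expDis f ρ (P.map Prod.fst) + jointErr f ρ P := by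
  have hmE := measurable_errInd f hf
  have hmD := measurable_dAgree f hf
  -- measurability of the two error components on (H × H) × (X × Bool)
  have hm1 : Measurable (fun p : (H × H) × (X × Bool) => errInd f p.1.1 p.2) :=
    hmE.comp ((measurable_fst.comp measurable_fst).prodMk measurable_snd)
  have hm2 : Measurable (fun p : (H × H) × (X × Bool) => errInd f p.1.2 p.2) :=
    hmE.comp ((measurable_snd.comp measurable_fst).prodMk measurable_snd)
  have hmDz : Measurable (fun p : (H × H) × (X × Bool) => dAgree f p.1 p.2.1) :=
    hmD.comp (measurable_fst.prodMk (measurable_fst.comp measurable_snd))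
  -- inner integrals
  have hint1 : ∀ hh : H × H, Integrable (fun z => errInd f hh.1 z) P := fun hh =>
    integrable_of_bounded (hmE.comp (measurable_const.prodMk measurable_id)) 1
      (fun z => abs_le.2 ⟨by linarith [errInd_nonneg f hh.1 z], errInd_le_one _ _ _⟩)
  have hint2 : ∀ hh : H × H, Integrable (fun z => errInd f hh.2 z) P := fun hh =>
    integrable_of_bounded (hmE.comp (measurable_const.prodMk measurable_id)) 1
      (fun z => abs_le.2 ⟨by linarith [errInd_nonneg f hh.2 z], errInd_le_one _ _ _⟩)
  have hintJ : ∀ hh : H × H, Integrable (fun z => errInd f hh.1 z * errInd f hh.2 z) P := by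
    intro hh
    refine integrable_of_bounded
      ((hmE.comp (measurable_const.prodMk measurable_id)).mul
        (hmE.comp (measurable_const.prodMk measurable_id))) 1 ?_
    intro z
    have a1 := errInd_nonneg f hh.1 z; have a2 := errInd_nonneg f hh.2 z
    have b1 := errInd_le_one f hh.1 z; have b2 := errInd_le_one f hh.2 z
    rw [abs_of_nonneg (mul_nonneg a1 a2)]
    calc errInd f hh.1 z * errInd f hh.2 z ≤ 1 * 1 := by
          exact mul_le_mul b1 b2 a2 zero_le_one
      _ = 1 := by ring
  -- inner integral identity
  have hinner : ∀ hh : H × H,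
      (∫ x, dAgree f hh x ∂(P.map Prod.fst))
        = (∫ z, errInd f hh.1 z ∂P) + (∫ z, errInd f hh.2 z ∂P)
          - 2 * ∫ z, errInd f hh.1 z * errInd f hh.2 z ∂P := by
    intro hh
    have hmap : (∫ x, dAgree f hh x ∂(P.map Prod.fst))
        = ∫ z, dAgree f hh z.1 ∂P :=
      integral_map measurable_fst.aemeasurable
        ((hmD.comp (measurable_const.prodMk measurable_id)).aestronglyMeasurable)
    rw [hmap]
    have hpt : (fun z : X × Bool => dAgree f hh z.1)
        = fun z => errInd f hh.1 z + errInd f hh.2 z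
            - 2 * (errInd f hh.1 z * errInd f hh.2 z) := by
      funext z
      have := pointwise_identity f hh z
      linarith
    have hadd : Integrable (fun z => errInd f hh.1 z + errInd f hh.2 z) P :=
      (hint1 hh).add (hint2 hh)
    rw [hpt, integral_sub hadd ((hintJ hh).const_mul 2),
      integral_add (hint1 hh) (hint2 hh), integral_const_mul 2 _]
  -- outer integrals
  set g : H → ℝ := fun h => ∫ z, errInd f h z ∂P with hg
  have hgm : Measurable g := by
    have : StronglyMeasurable (fun p : H × (X × Bool) => errInd f p.1 p.2) :=
      hmE.stronglyMeasurable
    exact this.integral_prod_right'.measurable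
  have hgb : ∀ h, |g h| ≤ 1 := by
    intro h
    have := norm_integral_le_of_norm_le_const (C := 1) (μ := P)
      (f := fun z => errInd f h z)
      (ae_of_all _ (fun z => by
        rw [Real.norm_eq_abs,
          abs_of_nonneg (errInd_nonneg f h z)]; exact errInd_le_one f h z))
    simpa [Real.norm_eq_abs] using this
  set J : H × H → ℝ := fun hh => ∫ z, errInd f hh.1 z * errInd f hh.2 z ∂P with hJ
  have hJm : Measurable J := by
    have : StronglyMeasurable
        (fun p : (H × H) × (X × Bool) => errInd f p.1.1 p.2 * errInd f p.1.2 p.2) :=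
      (hm1.mul hm2).stronglyMeasurable
    exact this.integral_prod_right'.measurable
  have hJb : ∀ hh, |J hh| ≤ 1 := by
    intro hh
    have := norm_integral_le_of_norm_le_const (C := 1) (μ := P)
      (f := fun z => errInd f hh.1 z * errInd f hh.2 z)
      (ae_of_all _ (fun z => by
        have a1 := errInd_nonneg f hh.1 z; have a2 := errInd_nonneg f hh.2 z
        have b1 := errInd_le_one f hh.1 z; have b2 := errInd_le_one f hh.2 z
        rw [Real.norm_eq_abs, abs_of_nonneg (mul_nonneg a1 a2)]
        calc errInd f hh.1 z * errInd f hh.2 z ≤ 1 * 1 :=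
              mul_le_mul b1 b2 a2 zero_le_one
          _ = 1 := by ring))
    simpa [Real.norm_eq_abs] using this
  have hIg1 : Integrable (fun hh : H × H => g hh.1) (ρ.prod ρ) :=
    integrable_of_bounded (hgm.comp measurable_fst) 1 (fun hh => hgb hh.1)
  have hIg2 : Integrable (fun hh : H × H => g hh.2) (ρ.prod ρ) :=
    integrable_of_bounded (hgm.comp measurable_snd) 1 (fun hh => hgb hh.2)
  have hIJ : Integrable J (ρ.prod ρ) := integrable_of_bounded hJm 1 hJb
  have hfst : (∫ hh : H × H, g hh.1 ∂(ρ.prod ρ)) = ∫ h, g h ∂ρ := by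
    rw [← integral_map measurable_fst.aemeasurable hgm.aestronglyMeasurable]
    congr 1
    rw [show Measure.map Prod.fst (ρ.prod ρ) = (ρ.prod ρ).fst from rfl, Measure.fst_prod]
  have hsnd : (∫ hh : H × H, g hh.2 ∂(ρ.prod ρ)) = ∫ h, g h ∂ρ := by
    rw [← integral_map measurable_snd.aemeasurable hgm.aestronglyMeasurable]
    congr 1
    rw [show Measure.map Prod.snd (ρ.prod ρ) = (ρ.prod ρ).snd from rfl, Measure.snd_prod]
  have hexp : expDis f ρ (P.map Prod.fst)
      = 2 * gibbsRisk f ρ P - 2 * jointErr f ρ P := by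
    unfold expDis
    calc (∫ hh : H × H, ∫ x, dAgree f hh x ∂(P.map Prod.fst) ∂(ρ.prod ρ))
        = ∫ hh : H × H, (g hh.1 + g hh.2 - 2 * J hh) ∂(ρ.prod ρ) := by
          refine integral_congr_ae (ae_of_all _ (fun hh => ?_))
          simpa [hg, hJ] using hinner hh
      _ = (∫ hh : H × H, g hh.1 ∂(ρ.prod ρ)) + (∫ hh : H × H, g hh.2 ∂(ρ.prod ρ))
          - 2 * ∫ hh, J hh ∂(ρ.prod ρ) := by
          have hadd : Integrable (fun hh : H × H => g hh.1 + g hh.2) (ρ.prod ρ) :=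
            hIg1.add hIg2
          rw [integral_sub hadd (hIJ.const_mul 2),
            integral_add hIg1 hIg2, integral_const_mul 2 _]
      _ = 2 * gibbsRisk f ρ P - 2 * jointErr f ρ P := by
          rw [hfst, hsnd]; unfold gibbsRisk jointErr; simp [hg, hJ]; ring
  rw [hexp]; ring

/-- Theorem 15 (multisource domain adaptation bound for the Gibbs classifier):
`R_{P_T}(Gρ) ≤ Σ_j v_j R_{P_{S_j}}(Gρ) + (1/2) dis_ρ(D_S^v,D_T) + λ_ρ^v`. -/
theorem multisource_da_bound_gibbs
    (f : H → X → Bool) (hf : Measurable (Function.uncurry f))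
    (n : ℕ) (hn : 0 < n)
    (PS : Fin n → Measure (X × Bool)) [∀ j, IsProbabilityMeasure (PS j)]
    (PT : Measure (X × Bool)) [IsProbabilityMeasure PT]
    (v : Fin n → ℝ) (hv0 : ∀ j, 0 ≤ v j) (hv1 : ∑ j, v j = 1)
    (ρ : Measure H) [IsProbabilityMeasure ρ] :
    gibbsRisk f ρ PT
      ≤ (∑ j, v j * gibbsRisk f ρ (PS j))
        + (1 / 2) * |expDis f ρ (PT.map Prod.fst)
                      - ∑ j, v j * expDis f ρ ((PS j).map Prod.fst)|
        + |jointErr f ρ PT - ∑ j, v j * jointErr f ρ (PS j)| := by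
  have hT := gibbs_decomp f hf ρ PT
  have hS : ∀ j, gibbsRisk f ρ (PS j)
      = (1 / 2) * expDis f ρ ((PS j).map Prod.fst) + jointErr f ρ (PS j) :=
    fun j => gibbs_decomp f hf ρ (PS j)
  set ET := expDis f ρ (PT.map Prod.fst)
  set JT := jointErr f ρ PT
  set ES := ∑ j, v j * expDis f ρ ((PS j).map Prod.fst)
  set JS := ∑ j, v j * jointErr f ρ (PS j)
  have hsum : (∑ j, v j * gibbsRisk f ρ (PS j)) = (1 / 2) * ES + JS := by
    rw [Finset.mul_sum, ← Finset.sum_add_distrib]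
    refine Finset.sum_congr rfl (fun j _ => ?_)
    rw [hS j]; ring
  have h1 : ET - ES ≤ |ET - ES| := le_abs_self _
  have h2 : JT - JS ≤ |JT - JS| := le_abs_self _
  rw [hT, hsum]
  linarith

end
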